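/- If π : (G,h) → (G',h') is a weighted edge contraction between finite connected weighted graphs (without legs), then the genus is preserved: b1(G) + Σ_{v ∈ V(G)} h(v) = b1(G') + Σ_{v' ∈ V(G')} h'(v'). -/

import Mathlib

open CategoryTheory

/-- A finite graph in the sense of Serre (without legs): a set `X` with an idempotent
root map `r` and an involution `i` commuting with `r`, fixing vertices, and without
fixed half-edges. -/
structure SGraph : Type 1 where
  X : Type
  r : X → X
  i : X → X
  r_idem : ∀ x, r (r x) = r x
  i_invol : ∀ x, i (i x) = x
  r_i : ∀ x, r (i x) = i (r x)
  i_vertex : ∀ x, r x = x → i x = x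
  no_legs : ∀ x, r x ≠ x → i x ≠ x

namespace SGraph

/-- Vertices: the fixed points (= image) of the root map. -/
def V (G : SGraph) : Type := {x : G.X // G.r x = x}

/-- Half-edges: the complement of the vertex set. -/
def HalfEdges (G : SGraph) : Type := {x : G.X // G.r x ≠ x}

/-- Unoriented edges: half-edges modulo the involution. -/
def E (G : SGraph) : Type := Quot (fun a b : G.HalfEdges => a.1 = G.i b.1)

noncomputable def numV (G : SGraph) : ℕ := Nat.card G.V

noncomputable def numE (G : SGraph) : ℕ := Nat.card G.E

/-- The first Betti number `#E - #V + 1` (as an integer). -/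
noncomputable def b1Z (G : SGraph) : ℤ := (G.numE : ℤ) - (G.numV : ℤ) + 1

/-- The genus `b1(G) + Σ_v h(v)` of a weighted graph (as an integer). -/
noncomputable def genusZ (G : SGraph) (h : G.X → ℕ) : ℤ :=
  G.b1Z + ∑ᶠ v : G.V, (h v.1 : ℤ)

/-- Two elements are adjacent if they are the two end vertices of an oriented edge. -/
def Adj (G : SGraph) (v w : G.X) : Prop :=
  ∃ f : G.X, G.r f ≠ f ∧ v = G.r (G.i f) ∧ w = G.r f

/-- A graph is connected if it is nonempty and any two vertices are joined by a path. -/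
def Connected (G : SGraph) : Prop :=
  Nonempty G.X ∧ ∀ v w : G.X, G.r v = v → G.r w = w → Relation.ReflTransGen G.Adj v w

theorem half_i (G : SGraph) {f : G.X} (hf : G.r f ≠ f) : G.r (G.i f) ≠ G.i f := by
  intro h
  have h2 : G.i (G.r f) = G.i f := (G.r_i f).symm.trans h
  have h3 := congrArg G.i h2
  rw [G.i_invol, G.i_invol] at h3
  exact hf h3

theorem rf_eq (G : SGraph) (f : G.X) : G.r f = G.r (G.i (G.i f)) := by rw [G.i_invol]

/-- The subgraph induced on a subset of `X` that is closed under `r` and `i`. -/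
def restrict (G : SGraph) (S : Set G.X) (hr : ∀ x ∈ S, G.r x ∈ S)
    (hi : ∀ x ∈ S, G.i x ∈ S) : SGraph where
  X := ↥S
  r x := ⟨G.r x.1, hr x.1 x.2⟩
  i x := ⟨G.i x.1, hi x.1 x.2⟩
  r_idem x := Subtype.ext (G.r_idem x.1)
  i_invol x := Subtype.ext (G.i_invol x.1)
  r_i x := Subtype.ext (G.r_i x.1)
  i_vertex x hx := Subtype.ext (G.i_vertex x.1 (congrArg Subtype.val hx))
  no_legs x hx hc := G.no_legs x.1 (fun hc' => hx (Subtype.ext hc')) (congrArg Subtype.val hc)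

end SGraph

/-- A graph of groups on a graph `G`: a group for every vertex, a group for every half-edge,
isomorphisms `G_f ≅ G_{i f}` and injections `G_f ↪ G_{r f}`. -/
structure GraphOfGroups (G : SGraph) : Type 1 where
  VG : G.X → GrpCat.{0}
  EG : G.X → GrpCat.{0}
  bar : ∀ f : G.X, EG f ≃* EG (G.i f)
  inc : ∀ f : G.X, EG f →* VG (G.r f)
  inc_inj : ∀ f : G.X, Function.Injective (inc f)

namespace GraphOfGroups

variable {G : SGraph}

/-- The graph of groups `𝔾(G,h)` associated to a weighted graph: the vertex group at `v` is
the free group of rank `h v` and all edge groups are trivial. -/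
def ofWeight (G : SGraph) (h : G.X → ℕ) : GraphOfGroups G where
  VG v := GrpCat.of (FreeGroup (Fin (h v)))
  EG _ := GrpCat.of PUnit
  bar _ := MulEquiv.refl _
  inc _ := 1
  inc_inj _ a b _ := Subsingleton.elim (α := PUnit) a b

/-- The trivial graph of groups on `G`: all vertex and edge groups are trivial. -/
def triv (G : SGraph) : GraphOfGroups G where
  VG _ := GrpCat.of PUnit
  EG _ := GrpCat.of PUnit
  bar _ := MulEquiv.refl _
  inc _ := 1
  inc_inj _ a b _ := Subsingleton.elim (α := PUnit) a b

/-- Generators for the fundamental groupoid of a graph of groups: an arrow for every oriented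
edge of the graph, and a loop at `v` for every element of the vertex group at `v`. -/
inductive Gen (𝔾 : GraphOfGroups G) : G.V → G.V → Type
  | edge (f : G.X) (hf : G.r f ≠ f) (a b : G.V)
      (ha : a.1 = G.r (G.i f)) (hb : b.1 = G.r f) : Gen 𝔾 a b
  | elt (v : G.V) (g : 𝔾.VG v.1) : Gen 𝔾 v v

/-- The objects of the fundamental groupoid: the vertices of `G`. -/
structure PObj (𝔾 : GraphOfGroups G) : Type where
  v : G.V

instance (𝔾 : GraphOfGroups G) : Quiver (PObj 𝔾) :=
  ⟨fun a b => Gen 𝔾 a.v b.v⟩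

/-- A vertex, as an object of the path category on the generating quiver. -/
def vtx (𝔾 : GraphOfGroups G) (v : G.V) : Paths (PObj 𝔾) := show PObj 𝔾 from ⟨v⟩

/-- The source vertex `r(i f)` of the oriented edge `f`. -/
def src (𝔾 : GraphOfGroups G) (f : G.X) : Paths (PObj 𝔾) :=
  show PObj 𝔾 from ⟨⟨G.r (G.i f), G.r_idem _⟩⟩

/-- The target vertex `r f` of the oriented edge `f`. -/
def tgt (𝔾 : GraphOfGroups G) (f : G.X) : Paths (PObj 𝔾) :=
  show PObj 𝔾 from ⟨⟨G.r f, G.r_idem f⟩⟩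

/-- The oriented edge `f` as a morphism in the path category. -/
def edgePath (𝔾 : GraphOfGroups G) (f : G.X) (hf : G.r f ≠ f) : 𝔾.src f ⟶ 𝔾.tgt f :=
  Quiver.Hom.toPath
    (show (⟨⟨G.r (G.i f), G.r_idem _⟩⟩ : PObj 𝔾) ⟶ ⟨⟨G.r f, G.r_idem f⟩⟩ from
      Gen.edge f hf _ _ rfl rfl)

/-- The reversed oriented edge `i f` as a morphism in the path category. -/
def edgePathRev (𝔾 : GraphOfGroups G) (f : G.X) (hf : G.r f ≠ f) : 𝔾.tgt f ⟶ 𝔾.src f :=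
  Quiver.Hom.toPath
    (show (⟨⟨G.r f, G.r_idem f⟩⟩ : PObj 𝔾) ⟶ ⟨⟨G.r (G.i f), G.r_idem _⟩⟩ from
      Gen.edge (G.i f) (G.half_i hf) _ _ (G.rf_eq f) rfl)

/-- A vertex group element `g ∈ G_v` as a loop at `v` in the path category. -/
def eltPath (𝔾 : GraphOfGroups G) (v : G.V) (g : 𝔾.VG v.1) : 𝔾.vtx v ⟶ 𝔾.vtx v :=
  Quiver.Hom.toPath (show (⟨v⟩ : PObj 𝔾) ⟶ ⟨v⟩ from Gen.elt v g)

/-- The defining relations of the fundamental groupoid of a graph of groups: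
the loops at `v` multiply as in the vertex group `G_v`, the reversal of an edge is its
inverse, and `e · a^g · ē = a^{ḡ}` for `g` in the edge group of `e`. -/
inductive Rel (𝔾 : GraphOfGroups G) :
    ∀ ⦃a b : Paths (PObj 𝔾)⦄, (a ⟶ b) → (a ⟶ b) → Prop
  | elt_one (v : G.V) : Rel 𝔾 (𝔾.eltPath v 1) (𝟙 (𝔾.vtx v))
  | elt_mul (v : G.V) (g g' : 𝔾.VG v.1) :
      Rel 𝔾 (𝔾.eltPath v g ≫ 𝔾.eltPath v g') (𝔾.eltPath v (g * g'))
  | edge_inv (f : G.X) (hf : G.r f ≠ f) :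
      Rel 𝔾 (𝔾.edgePath f hf ≫ 𝔾.edgePathRev f hf) (𝟙 (𝔾.src f))
  | edge_inv' (f : G.X) (hf : G.r f ≠ f) :
      Rel 𝔾 (𝔾.edgePathRev f hf ≫ 𝔾.edgePath f hf) (𝟙 (𝔾.tgt f))
  | conj (f : G.X) (hf : G.r f ≠ f) (g : 𝔾.EG f) :
      Rel 𝔾 (𝔾.edgePath f hf ≫ 𝔾.eltPath ⟨G.r f, G.r_idem f⟩ (𝔾.inc f g) ≫ 𝔾.edgePathRev f hf)
        (𝔾.eltPath ⟨G.r (G.i f), G.r_idem _⟩ (𝔾.inc (G.i f) (𝔾.bar f g)))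

/-- The fundamental groupoid `π₁(𝔾)` of a graph of groups, presented by generators
and relations as a quotient of the path category on the generating quiver. -/
abbrev FGpd (𝔾 : GraphOfGroups G) := CategoryTheory.Quotient (Rel 𝔾)

/-- A vertex of `G`, as an object of the fundamental groupoid `π₁(𝔾)`. -/
def FGpd.obj (𝔾 : GraphOfGroups G) (v : G.V) : FGpd 𝔾 := ⟨𝔾.vtx v⟩

theorem FGpd.obj_ext (𝔾 : GraphOfGroups G) {v w : G.V} (h : v.1 = w.1) :
    FGpd.obj 𝔾 v = FGpd.obj 𝔾 w :=
  congrArg (FGpd.obj 𝔾) (Subtype.ext h)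

end GraphOfGroups

section AuxGenus

open Finset

theorem nat_card_fiber_sum' {α β : Type*} [Finite α] [Fintype β] (q : α → β) :
    Nat.card α = ∑ b : β, Nat.card {a : α // q a = b} := by
  classical
  have : Fintype α := Fintype.ofFinite _
  simp only [Nat.card_eq_fintype_card]
  rw [← Fintype.card_congr (Equiv.sigmaFiberEquiv q), Fintype.card_sigma]

theorem sum_fiber' {α β M : Type*} [Fintype α] [Fintype β] [DecidableEq β] [AddCommMonoid M]
    (q : α → β) (g : α → M) :
    ∑ a : α, g a = ∑ b : β, ∑ x : {a : α // q a = b}, g x.1 := by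
  classical
  rw [← Equiv.sum_comp (Equiv.sigmaFiberEquiv q) g, ← Finset.univ_sigma_univ,
    Finset.sum_sigma]
  rfl

theorem sum_split' {α M : Type*} [Fintype α] [AddCommMonoid M] (p : α → Prop)
    {β γ : Type*} [Fintype β] [Fintype γ] (e1 : β ≃ {a // p a}) (e2 : γ ≃ {a // ¬ p a})
    (F : α → M) :
    ∑ a : α, F a = ∑ x : β, F (e1 x).1 + ∑ x : γ, F (e2 x).1 := by
  classical
  rw [← Equiv.sum_comp (Equiv.sumCompl p) F, Fintype.sum_sum_type]
  congr 1
  · exact (Fintype.sum_equiv e1 _ _ (fun x => rfl)).symm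
  · exact (Fintype.sum_equiv e2 _ _ (fun x => rfl)).symm

namespace SGraph

instance instFiniteV (G : SGraph) [Finite G.X] : Finite G.V := Subtype.finite
instance instFiniteHalf (G : SGraph) [Finite G.X] : Finite G.HalfEdges := Subtype.finite
instance instFiniteE (G : SGraph) [Finite G.X] : Finite G.E := Quot.finite _

noncomputable instance instFintypeV (G : SGraph) [Finite G.X] : Fintype G.V :=
  Fintype.ofFinite _
noncomputable instance instFintypeHalf (G : SGraph) [Finite G.X] : Fintype G.HalfEdges :=
  Fintype.ofFinite _
noncomputable instance instFintypeE (G : SGraph) [Finite G.X] : Fintype G.E :=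
  Fintype.ofFinite _

theorem quot_mk_eq_iff (G : SGraph) (a b : G.HalfEdges) :
    Quot.mk (fun a b : G.HalfEdges => a.1 = G.i b.1) a
      = Quot.mk (fun a b : G.HalfEdges => a.1 = G.i b.1) b ↔ a = b ∨ a.1 = G.i b.1 := by
  constructor
  · intro hq
    have hequiv : Equivalence (fun a b : G.HalfEdges => a = b ∨ a.1 = G.i b.1) := by
      constructor
      · intro x; exact Or.inl rfl
      · rintro x y (rfl | hxy)
        · exact Or.inl rfl
        · exact Or.inr (by rw [hxy, G.i_invol])
      · rintro x y z (rfl | hxy) (rfl | hyz)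
        · exact Or.inl rfl
        · exact Or.inr hyz
        · exact Or.inr hxy
        · exact Or.inl (Subtype.ext (by rw [hxy, hyz, G.i_invol]))
    exact hequiv.eqvGen_iff.mp ((Quot.eqvGen_exact hq).mono (fun x y hxy => Or.inr hxy))
  · rintro (rfl | hab)
    · rfl
    · exact Quot.sound hab

theorem two_mul_card_E (G : SGraph) [Finite G.X] :
    Nat.card G.HalfEdges = 2 * Nat.card G.E := by
  classical
  have hE : ∀ e : G.E,
      Nat.card {f : G.HalfEdges // Quot.mk (fun a b : G.HalfEdges => a.1 = G.i b.1) f = e}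
        = 2 := by
    intro e
    induction e using Quot.ind with
    | _ a =>
      rw [Nat.card_eq_two_iff]
      have hne : G.r (G.i a.1) ≠ G.i a.1 := G.half_i a.2
      refine ⟨⟨a, rfl⟩, ⟨⟨G.i a.1, hne⟩, Quot.sound rfl⟩, ?_, ?_⟩
      · intro hc
        have h1 := congrArg (fun x => x.1.1) hc
        exact G.no_legs a.1 a.2 h1.symm
      · ext ⟨f, hf⟩
        simp only [Set.mem_insert_iff, Set.mem_singleton_iff, Set.mem_univ, iff_true]
        rcases (G.quot_mk_eq_iff f a).mp hf with rfl | hfa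
        · exact Or.inl rfl
        · exact Or.inr (Subtype.ext (Subtype.ext hfa))
  rw [nat_card_fiber_sum' (β := G.E) (Quot.mk (fun a b : G.HalfEdges => a.1 = G.i b.1))]
  refine (Finset.sum_congr rfl fun e _ => hE e).trans ?_
  simp only [hE, Finset.sum_const, Finset.card_univ, smul_eq_mul,
    Nat.card_eq_fintype_card, mul_comm]

end SGraph

end AuxGenus


/-- The subgraph of `G` induced on the preimage of a vertex `v'` under a graph morphism. -/
def preimageGraph (G G' : SGraph) (φ : G.X → G'.X)
    (hr : ∀ x, φ (G.r x) = G'.r (φ x)) (hi : ∀ x, φ (G.i x) = G'.i (φ x))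
    (v' : G'.X) (hv : G'.r v' = v') : SGraph :=
  G.restrict {x | φ x = v'}
    (fun x hx => (hr x).trans (by rw [show φ x = v' from hx]; exact hv))
    (fun x hx => (hi x).trans (by rw [show φ x = v' from hx]; exact G'.i_vertex v' hv))

/-- A (generalized) weighted edge contraction `π : (G,h) → (G',h')`: a map of the underlying
sets commuting with the root maps and involutions, such that every half-edge of `G'` has
exactly one preimage and the preimage of every vertex `v'` of `G'` is a connected subgraph
of genus `h' v'`. -/
structure WEC (G G' : SGraph) (h : G.X → ℕ) (h' : G'.X → ℕ) where
  toFun : G.X → G'.X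
  map_r : ∀ x, toFun (G.r x) = G'.r (toFun x)
  map_i : ∀ x, toFun (G.i x) = G'.i (toFun x)
  halfedge_unique : ∀ f' : G'.X, G'.r f' ≠ f' → ∃! x : G.X, toFun x = f'
  preim_conn : ∀ (v' : G'.X) (hv : G'.r v' = v'),
    (preimageGraph G G' toFun map_r map_i v' hv).Connected
  preim_genus : ∀ (v' : G'.X) (hv : G'.r v' = v'),
    (preimageGraph G G' toFun map_r map_i v' hv).genusZ (fun x => h x.1) = (h' v' : ℤ)

/-- The preimage of a vertex under a weighted edge contraction, as a subgraph. -/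
def WEC.preim {G G' : SGraph} {h : G.X → ℕ} {h' : G'.X → ℕ} (π : WEC G G' h h')
    (v' : G'.X) (hv : G'.r v' = v') : SGraph :=
  preimageGraph G G' π.toFun π.map_r π.map_i v' hv


namespace WEC

variable {G G' : SGraph} {h : G.X → ℕ} {h' : G'.X → ℕ}

/-- The preimage graph of a vertex, with the vertex given as an element of `G'.V`. -/
def Pg (π : WEC G G' h h') (v' : G'.V) : SGraph := π.preim v'.1 v'.2

instance (π : WEC G G' h h') (v' : G'.V) [Finite G.X] : Finite (π.Pg v').X :=
  Subtype.finite

theorem Pg_genus (π : WEC G G' h h') (v' : G'.V) :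
    (π.Pg v').genusZ (fun x => h x.1) = (h' v'.1 : ℤ) :=
  π.preim_genus v'.1 v'.2

/-- The map induced by `π` on vertices. -/
def vmap (π : WEC G G' h h') (v : G.V) : G'.V :=
  ⟨π.toFun v.1, (π.map_r v.1).symm.trans (congrArg π.toFun v.2)⟩

/-- The fiber of the vertex map over `v'` is the vertex set of the preimage graph. -/
def fiberVEquiv (π : WEC G G' h h') (v' : G'.V) :
    {v : G.V // π.vmap v = v'} ≃ (π.Pg v').V where
  toFun p := ⟨⟨p.1.1, congrArg Subtype.val p.2⟩, Subtype.ext p.1.2⟩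
  invFun y := ⟨⟨y.1.1, congrArg Subtype.val y.2⟩, Subtype.ext y.1.2⟩
  left_inv _ := rfl
  right_inv _ := rfl

/-- The half-edges of `G` lying over a vertex `v'` of `G'` are the half-edges of the
preimage graph of `v'`. -/
def fiberHEquiv (π : WEC G G' h h') (v' : G'.V) :
    {f : G.HalfEdges // π.toFun f.1 = v'.1} ≃ (π.Pg v').HalfEdges where
  toFun p := ⟨⟨p.1.1, p.2⟩, fun hc => p.1.2 (congrArg Subtype.val hc)⟩
  invFun y := ⟨⟨y.1.1, fun hc => y.2 (Subtype.ext hc)⟩, y.1.2⟩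
  left_inv _ := rfl
  right_inv _ := rfl

theorem card_fiber_half (π : WEC G G' h h') (f' : G'.HalfEdges) :
    Nat.card {f : G.HalfEdges // π.toFun f.1 = f'.1} = 1 := by
  rw [Nat.card_eq_one_iff_exists]
  obtain ⟨x, hx, hun⟩ := π.halfedge_unique f'.1 f'.2
  have hxh : G.r x ≠ x := by
    intro hrx
    apply f'.2
    calc G'.r f'.1 = G'.r (π.toFun x) := by rw [hx]
      _ = π.toFun (G.r x) := (π.map_r x).symm
      _ = π.toFun x := by rw [hrx]
      _ = f'.1 := hx
  exact ⟨⟨⟨x, hxh⟩, hx⟩, fun y => Subtype.ext (Subtype.ext (hun y.1.1 y.2))⟩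

end WEC


/-- A weighted edge contraction between finite connected weighted graphs preserves the genus
`b1(G) + Σ_v h(v)`. -/
theorem WEC.genus_eq (G G' : SGraph) [Finite G.X] [Finite G'.X]
    (h : G.X → ℕ) (h' : G'.X → ℕ) (hG : G.Connected) (hG' : G'.Connected)
    (π : WEC G G' h h') :
    G.genusZ h = G'.genusZ h' := by
  classical
  have fX' : Fintype G'.X := Fintype.ofFinite _
  -- vertex count
  have hVcard : Nat.card G.V = ∑ v' : G'.V, Nat.card (π.Pg v').V := by
    rw [nat_card_fiber_sum' (β := G'.V) π.vmap]
    exact Finset.sum_congr rfl fun v' _ => Nat.card_congr (π.fiberVEquiv v')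
  -- weight sum
  have hhsum : ∑ v : G.V, (h v.1 : ℤ)
      = ∑ v' : G'.V, ∑ w : (π.Pg v').V, (h w.1.1 : ℤ) := by
    rw [sum_fiber' (β := G'.V) π.vmap (fun v => (h v.1 : ℤ))]
    exact Finset.sum_congr rfl fun v' _ =>
      Fintype.sum_equiv (π.fiberVEquiv v') _ _ (fun x => rfl)
  -- half-edge count
  have hHcard : Nat.card G.HalfEdges
      = (∑ v' : G'.V, Nat.card (π.Pg v').HalfEdges) + Nat.card G'.HalfEdges := by
    rw [nat_card_fiber_sum' (β := G'.X) (fun f : G.HalfEdges => π.toFun f.1)]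
    rw [sum_split' (fun y : G'.X => G'.r y = y)
      (Equiv.refl G'.V) (Equiv.refl G'.HalfEdges)
      (fun y => Nat.card {f : G.HalfEdges // π.toFun f.1 = y})]
    congr 1
    · exact Finset.sum_congr rfl fun v' _ => Nat.card_congr (π.fiberHEquiv v')
    · refine (Finset.sum_congr rfl fun f' _ => π.card_fiber_half f').trans ?_
      simp [Nat.card_eq_fintype_card]
  -- edge count
  have hEcard : Nat.card G.E = (∑ v' : G'.V, Nat.card (π.Pg v').E) + Nat.card G'.E := by
    refine Nat.eq_of_mul_eq_mul_left (show 0 < 2 by norm_num) ?_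
    rw [← G.two_mul_card_E, hHcard, mul_add, Finset.mul_sum, ← G'.two_mul_card_E]
    congr 1
    exact Finset.sum_congr rfl fun v' _ => (π.Pg v').two_mul_card_E
  -- per-vertex genus
  have hg : ∀ v' : G'.V,
      (Nat.card (π.Pg v').E : ℤ) - (Nat.card (π.Pg v').V : ℤ) + 1
        + ∑ w : (π.Pg v').V, (h w.1.1 : ℤ) = (h' v'.1 : ℤ) := by
    intro v'
    have hgen := π.Pg_genus v'
    simp only [SGraph.genusZ, SGraph.b1Z, SGraph.numE, SGraph.numV,
      finsum_eq_sum_of_fintype] at hgen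
    exact hgen
  -- assemble
  simp only [SGraph.genusZ, SGraph.b1Z, SGraph.numE, SGraph.numV,
    finsum_eq_sum_of_fintype]
  have hs : ∑ v' : G'.V, (h' v'.1 : ℤ)
      = ∑ v' : G'.V, ((Nat.card (π.Pg v').E : ℤ) - (Nat.card (π.Pg v').V : ℤ) + 1
        + ∑ w : (π.Pg v').V, (h w.1.1 : ℤ)) :=
    Finset.sum_congr rfl fun v' _ => (hg v').symm
  rw [hs, hhsum, hEcard, hVcard]
  push_cast
  simp only [Finset.sum_add_distrib, Finset.sum_sub_distrib, Finset.sum_const,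
    Finset.card_univ, nsmul_eq_mul, mul_one, Nat.card_eq_fintype_card]
  ring
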